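/- If the interaction graph G(f) of a Boolean network f : {0,1}^n → {0,1}^n has no positive cycles, then f has at most one fixed point. -/

import Mathlib

/-- One asynchronous update step of the Boolean network `f`. -/
def Step {I : Type*} [DecidableEq I] (f : (I → Bool) → I → Bool) (x y : I → Bool) : Prop :=
  ∃ i, f x i ≠ x i ∧ y = Function.update x i (f x i)

/-- `Γ(f)` has a path from `x` to `y` of length `l`. -/
def PathLen {I : Type*} [DecidableEq I] (f : (I → Bool) → I → Bool)
    (x y : I → Bool) (l : ℕ) : Prop :=
  ∃ p : ℕ → I → Bool, p 0 = x ∧ p l = y ∧ ∀ k < l, Step f (p k) (p (k + 1))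

/-- Positive arc from `j` to `i` in the interaction graph `G(f)`. -/
def PosArc {n : ℕ} (f : (Fin n → Bool) → Fin n → Bool) (j i : Fin n) : Prop :=
  ∃ x, f (Function.update x j true) i = true ∧ f (Function.update x j false) i = false

/-- Negative arc from `j` to `i` in the interaction graph `G(f)`. -/
def NegArc {n : ℕ} (f : (Fin n → Bool) → Fin n → Bool) (j i : Fin n) : Prop :=
  ∃ x, f (Function.update x j true) i = false ∧ f (Function.update x j false) i = true

/-- Arc in the underlying unsigned digraph of `G(f)`. -/
def Arc {n : ℕ} (f : (Fin n → Bool) → Fin n → Bool) (j i : Fin n) : Prop :=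
  PosArc f j i ∨ NegArc f j i

/-- The interaction graph `G(f)` is acyclic (no directed cycle, including loops). -/
def AcyclicIG {n : ℕ} (f : (Fin n → Bool) → Fin n → Bool) : Prop :=
  ∀ i, ¬ Relation.TransGen (Arc f) i i

/-- Hamming distance. -/
def ham {n : ℕ} (x y : Fin n → Bool) : ℕ :=
  (Finset.univ.filter fun i => x i ≠ y i).card

/-- Componentwise negation. -/
def negc {n : ℕ} (x : Fin n → Bool) : Fin n → Bool := fun i => !(x i)

/-- Number of ones (weight). -/
def wt {n : ℕ} (x : Fin n → Bool) : ℕ :=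
  (Finset.univ.filter fun i => x i = true).card

/-- `x` with coordinate `i` flipped. -/
def flipAt {n : ℕ} (x : Fin n → Bool) (i : Fin n) : Fin n → Bool :=
  Function.update x i (!(x i))

/-- `G(f)` has no negative loops. -/
def NoNegLoop {n : ℕ} (f : (Fin n → Bool) → Fin n → Bool) : Prop :=
  ∀ i, ¬ NegArc f i i

/-- First-half components of the embedding construction `f'`. -/
def F1 {n : ℕ} (f : (Fin n → Bool) → Fin n → Bool) (x y : Fin n → Bool) (i : Fin n) : Bool :=
  if y = negc x ∨ flipAt y i = negc x then f x i
  else if wt x + wt y = n then !(x i)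
  else if wt x + wt y = n + 1 then true
  else if wt x + wt y + 1 = n then false
  else if n + 2 ≤ wt x + wt y then true
  else false

/-- The embedding construction `f' : {0,1}^{2n} → {0,1}^{2n}`, with the `2n`
coordinates indexed by `Fin n ⊕ Fin n`. -/
def Fext {n : ℕ} (f : (Fin n → Bool) → Fin n → Bool) (z : (Fin n ⊕ Fin n) → Bool) :
    (Fin n ⊕ Fin n) → Bool :=
  Sum.elim (fun i => F1 f (z ∘ Sum.inl) (z ∘ Sum.inr) i)
           (fun i => !(F1 f (negc (z ∘ Sum.inr)) (negc (z ∘ Sum.inl)) i))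

/-- Concatenation `(x, y) ∈ {0,1}^{2n}`. -/
def pair {n : ℕ} (x y : Fin n → Bool) : (Fin n ⊕ Fin n) → Bool := Sum.elim x y

lemma even_changes {m : ℕ} (w : Fin (m + 1) → Bool) :
    Even ((Finset.univ.filter fun r : Fin (m+1) => w r ≠ w (r + 1)).card) := by
  rw [even_iff_two_dvd, ← ZMod.natCast_eq_zero_iff]
  rw [Finset.card_filter, Nat.cast_sum]
  have key : ∀ r : Fin (m+1), ((if w r ≠ w (r+1) then 1 else 0 : ℕ) : ZMod 2)
      = (if w r then 1 else 0) + (if w (r+1) then 1 else 0) := by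
    intro r; cases hw : w r <;> cases hw' : w (r+1) <;> simp [hw, hw'] <;> decide
  rw [Finset.sum_congr rfl fun r _ => key r, Finset.sum_add_distrib]
  have he : ∑ r : Fin (m+1), (if w (r+1) then (1:ZMod 2) else 0)
      = ∑ r : Fin (m+1), (if w r then (1:ZMod 2) else 0) :=
    Fintype.sum_equiv (Equiv.addRight 1) _ _ (fun r => rfl)
  rw [he, ← two_mul]
  have : (2 : ZMod 2) = 0 := rfl
  rw [this, zero_mul]

lemma exist_pred {n : ℕ} (f : (Fin n → Bool) → Fin n → Bool) {y z : Fin n → Bool}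
    (hy : f y = y) (hz : f z = z) {i : Fin n} (hi : y i ≠ z i) :
    ∃ j, y j ≠ z j ∧ ((z j = z i ∧ PosArc f j i) ∨ (z j ≠ z i ∧ NegArc f j i)) := by
  set p : ℕ → Fin n → Bool := fun k i => if i.val < k then z i else y i with hp
  have h0 : p 0 = y := by funext j; simp [hp]
  have hn : p n = z := by funext j; simp [hp, j.isLt]
  have hex : ∃ K, f (p K) i = z i := ⟨n, by rw [hn, hz]⟩
  set K := Nat.find hex with hK
  have hKspec : f (p K) i = z i := Nat.find_spec hex
  have hKpos : K ≠ 0 := by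
    intro h0'
    rw [h0'] at hKspec; rw [h0, hy] at hKspec; exact hi hKspec
  obtain ⟨k, hk⟩ : ∃ k, K = k + 1 := ⟨K - 1, (Nat.succ_pred_eq_of_ne_zero hKpos).symm⟩
  have hkmin : ¬ (f (p k) i = z i) := Nat.find_min hex (by omega)
  have hfk : f (p k) i = y i := by
    have hb : ∀ a b c : Bool, a ≠ c → b ≠ c → a = b := by decide
    exact hb _ _ _ hkmin hi
  have hkn : k < n := by
    have : K ≤ n := Nat.find_le (by rw [hn, hz])
    by_contra h
    have : p k = z := by
      funext j; simp only [hp]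
      have : (j : ℕ) < k := by omega
      simp [this]
    exact hkmin (by rw [this, hz])
  set j : Fin n := ⟨k, hkn⟩ with hj
  have hpkj : p k j = y j := by simp [hp, hj]
  have hstep : p (k+1) = Function.update (p k) j (z j) := by
    funext i'
    rcases eq_or_ne i' j with h | h
    · subst h; simp [hp, Function.update_self, hj]
    · have hne : (i' : ℕ) ≠ k := fun hc => h (Fin.ext hc)
      rw [Function.update_of_ne h]
      simp only [hp]
      by_cases hlt : (i' : ℕ) < k
      · rw [if_pos hlt, if_pos (by omega)]
      · rw [if_neg hlt, if_neg (by omega)]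
  have hfk1 : f (Function.update (p k) j (z j)) i = z i := by
    rw [← hstep, ← hk]; exact hKspec
  have hjD : y j ≠ z j := by
    intro hc
    rw [← hc, ← hpkj, Function.update_eq_self] at hfk1
    rw [hfk] at hfk1
    exact hi hfk1
  refine ⟨j, hjD, ?_⟩
  have hfk0 : f (Function.update (p k) j (y j)) i = y i := by
    rw [← hpkj, Function.update_eq_self, hfk]
  cases hyj : y j
  · have hzj : z j = true := by revert hjD; cases z j <;> simp [hyj]
    rw [hzj] at hfk1
    rw [hyj] at hfk0
    cases hzi : z i
    · have hyi : y i = true := by revert hi; cases y i <;> simp [hzi]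
      exact Or.inr ⟨by simp [hzj, hzi], p k, by rw [hfk1]; exact hzi,
        by rw [hfk0]; exact hyi⟩
    · have hyi : y i = false := by revert hi; cases y i <;> simp [hzi]
      exact Or.inl ⟨by simp [hzj, hzi], p k, by rw [hfk1]; exact hzi,
        by rw [hfk0]; exact hyi⟩
  · have hzj : z j = false := by revert hjD; cases z j <;> simp [hyj]
    rw [hzj] at hfk1
    rw [hyj] at hfk0
    cases hzi : z i
    · have hyi : y i = true := by revert hi; cases y i <;> simp [hzi]
      exact Or.inl ⟨by simp [hzj, hzi], p k, by rw [hfk0]; exact hyi,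
        by rw [hfk1]; exact hzi⟩
    · have hyi : y i = false := by revert hi; cases y i <;> simp [hzi]
      exact Or.inr ⟨by simp [hzj, hzi], p k, by rw [hfk0]; exact hyi,
        by rw [hfk1]; exact hzi⟩

theorem stmt_18 {n : ℕ} (f : (Fin n → Bool) → Fin n → Bool)
    (hG : ¬ ∃ (k : ℕ) (v : Fin (k + 1) → Fin n) (s : Fin (k + 1) → Bool),
      Function.Injective v ∧
      (∀ i, if s i then PosArc f (v i) (v (i + 1)) else NegArc f (v i) (v (i + 1))) ∧
      Even ((Finset.univ.filter fun i => s i = false).card)) :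
    ∀ y z, f y = y → f z = z → y = z := by
  intro y z hy hz
  by_contra hne
  obtain ⟨i0, hi0⟩ : ∃ i, y i ≠ z i := Function.ne_iff.mp hne
  have H : ∀ i : Fin n, ∃ j, y i ≠ z i →
      (y j ≠ z j ∧ ((z j = z i ∧ PosArc f j i) ∨ (z j ≠ z i ∧ NegArc f j i))) := by
    intro i
    by_cases hi : y i ≠ z i
    · obtain ⟨j, hj⟩ := exist_pred f hy hz hi
      exact ⟨j, fun _ => hj⟩
    · exact ⟨i, fun h => absurd h hi⟩
  choose g hg using H
  set u : ℕ → Fin n := fun r => g^[r] i0 with hu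
  have huD : ∀ r, y (u r) ≠ z (u r) := by
    intro r
    induction r with
    | zero => exact hi0
    | succ r ih =>
      have : u (r+1) = g (u r) := Function.iterate_succ_apply' g r i0
      rw [this]
      exact (hg (u r) ih).1
  have hgu : ∀ r, u (r + 1) = g (u r) := fun r => Function.iterate_succ_apply' g r i0
  -- pigeonhole
  obtain ⟨a, b, hab, heq⟩ := Finite.exists_ne_map_eq_of_infinite u
  have hQ : ∃ r2, ∃ r1, r1 < r2 ∧ u r1 = u r2 := by
    rcases Nat.lt_or_ge a b with h | h
    · exact ⟨b, a, h, heq⟩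
    · exact ⟨a, b, by omega, heq.symm⟩
  set r2 := Nat.find hQ with hr2
  obtain ⟨r1, hr1lt, hr1eq⟩ := Nat.find_spec hQ
  have hinj : ∀ c d, c < d → d < r2 → u c ≠ u d := by
    intro c d hcd hd hne'
    exact Nat.find_min hQ hd ⟨c, hcd, hne'⟩
  obtain ⟨k, hk⟩ : ∃ k, r2 = r1 + k + 1 := ⟨r2 - r1 - 1, by omega⟩
  set v : Fin (k + 1) → Fin n := fun r => u (r1 + (k - r.val)) with hv
  have hvD : ∀ r, y (v r) ≠ z (v r) := fun r => huD _
  have hvinj : Function.Injective v := by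
    intro c d hcd
    have hc : c.val ≤ k := Nat.lt_succ_iff.mp c.isLt
    have hd : d.val ≤ k := Nat.lt_succ_iff.mp d.isLt
    by_contra hne'
    have hne'' : c.val ≠ d.val := fun h => hne' (Fin.ext h)
    rcases Nat.lt_or_ge (k - c.val) (k - d.val) with h | h
    · exact hinj _ _ (by omega) (by omega) hcd
    · exact hinj _ _ (by omega) (by omega) hcd.symm
  have hvg : ∀ r : Fin (k + 1), v r = g (v (r + 1)) := by
    intro r
    rw [hv]
    simp only
    rw [← hgu]
    rcases eq_or_ne r (Fin.last k) with h | h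
    · have h1 : ((r + 1 : Fin (k+1)) : ℕ) = 0 := by rw [Fin.val_add_one, if_pos h]
      have h2 : (r : ℕ) = k := by rw [h]; rfl
      rw [h1, h2]
      simp only [Nat.sub_zero, Nat.sub_self, Nat.add_zero]
      rw [← hk, ← hr1eq]
    · have h1 : ((r + 1 : Fin (k+1)) : ℕ) = (r : ℕ) + 1 := by rw [Fin.val_add_one, if_neg h]
      have h2 : (r : ℕ) < k := by
        have h3 : (r : ℕ) ≠ k := fun hc => h (by apply Fin.ext; rw [hc, Fin.val_last])
        have := r.isLt
        omega
      rw [h1]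
      congr 1
      omega
  set s : Fin (k + 1) → Bool := fun r => decide (z (v r) = z (v (r + 1))) with hs
  refine hG ⟨k, v, s, hvinj, ?_, ?_⟩
  · intro r
    have hprop := (hg (v (r + 1)) (hvD (r + 1))).2
    rw [← hvg r] at hprop
    rcases hprop with ⟨hzz, hpos⟩ | ⟨hzz, hneg⟩
    · have : s r = true := by rw [hs]; simp only [decide_eq_true_eq]; exact hzz
      rw [this]; simpa using hpos
    · have : s r = false := by rw [hs]; simp only [decide_eq_false_iff_not]; exact hzz
      rw [this]; simpa using hneg
  · have hcongr : (Finset.univ.filter fun r => s r = false)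
        = (Finset.univ.filter fun r : Fin (k+1) => (fun t => z (v t)) r ≠ (fun t => z (v t)) (r + 1)) := by
      apply Finset.filter_congr
      intro r _
      rw [hs]
      simp
    rw [hcongr]
    exact even_changes (fun t => z (v t))
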